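/- arXiv:2007.01283 — 3 statements merged into one kernel-verified Lean document; each statement's English description precedes it below -/
import Mathlib

section
/- For any measurable μ with E[μ(X,Z)²] < ∞ and E[Y²] < ∞, the floodgate numerator satisfies E[Cov(μ*(X,Z), μ(X,Z) | Z)] = E[Y · (μ(X,Z) - E[μ(X,Z) | Z])], where μ*(x,z) = E[Y|X=x,Z=z]. -/
open MeasureTheory ProbabilityTheory

/-- Product of two L² functions is integrable. -/
lemma integrable_mul_of_memL2 {α : Type*} {m : MeasurableSpace α} {μ : Measure α} {f g : α → ℝ}
    (hf : MemLp f 2 μ) (hg : MemLp g 2 μ) : Integrable (f * g) μ := by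
  have h : MemLp (f • g) 1 μ := hg.smul hf (hpqr := ⟨by rw [inv_one, ENNReal.inv_two_add_inv_two]⟩)
  rw [memLp_one_iff_integrable] at h
  simpa [smul_eq_mul] using h

/-- Conditional expectation of an L² function is L². -/
lemma memℒp_two_condexp {α : Type*} {m m0 : MeasurableSpace α} (hm : m ≤ m0)
    (μ : Measure α) [IsFiniteMeasure μ] {f : α → ℝ} (hf : MemLp f 2 μ) :
    MemLp (μ[f|m]) 2 μ := by
  set fL : Lp ℝ 2 μ := hf.toLp f with hfL
  have hcoe : (fL : α → ℝ) =ᵐ[μ] f := hf.coeFn_toLp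
  set gL : Lp ℝ 2 μ := ↑(condExpL2 ℝ ℝ hm fL) with hgL
  have hmeas : AEStronglyMeasurable[m] (gL : α → ℝ) μ := lpMeas.aestronglyMeasurable _
  have heq : (gL : α → ℝ) =ᵐ[μ] μ[f|m] := by
    refine ae_eq_condExp_of_forall_setIntegral_eq hm (hf.integrable one_le_two)
      (fun s _ _ => ((Lp.memLp gL).integrable one_le_two).integrableOn)
      (fun s hs hμs => ?_) hmeas
    rw [hgL, integral_condExpL2_eq hm fL hs hμs.ne]
    exact setIntegral_congr_ae (hm s hs) (hcoe.mono fun x hx _ => hx)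
  exact (Lp.memLp gL).ae_eq heq

/-- The floodgate numerator identity:
`E[Cov(μ*, μ | Z)] = E[Y (μ(X,Z) - E[μ(X,Z)|Z])]` where `μ* = E[Y|X,Z]` and
`g` plays the role of `μ(X,Z)`. -/
theorem stmt4
    {Ω : Type*} [m0 : MeasurableSpace Ω] (P : Measure Ω) [IsProbabilityMeasure P]
    (mZ mXZ : MeasurableSpace Ω) (hZ : mZ ≤ mXZ) (hXZ : mXZ ≤ m0)
    (Y : Ω → ℝ) (hY : MemLp Y 2 P)
    (g : Ω → ℝ) (hg : MemLp g 2 P) (hgm : StronglyMeasurable[mXZ] g) :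
    ∫ ω, ((P[(P[Y|mXZ]) * g|mZ]) ω - (P[P[Y|mXZ]|mZ]) ω * (P[g|mZ]) ω) ∂P
      = ∫ ω, Y ω * (g ω - (P[g|mZ]) ω) ∂P := by
  have hm : mZ ≤ m0 := hZ.trans hXZ
  -- L² facts
  have hY2 : MemLp (P[Y|mXZ]) 2 P := memℒp_two_condexp hXZ P hY
  have hgZ2 : MemLp (P[g|mZ]) 2 P := memℒp_two_condexp hm P hg
  have hYint : Integrable Y P := hY.integrable one_le_two
  -- integrability of products
  have hA_int : Integrable ((P[Y|mXZ]) * g) P := integrable_mul_of_memL2 hY2 hg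
  have hgY_int : Integrable (g * Y) P := integrable_mul_of_memL2 hg hY
  have hB_int : Integrable ((P[g|mZ]) * Y) P := integrable_mul_of_memL2 hgZ2 hY
  have hYg_int : Integrable (fun ω => Y ω * g ω) P := by
    exact (by rw [mul_comm]; exact hgY_int : Integrable (Y * g) P)
  have hYgZ_int : Integrable (fun ω => Y ω * (P[g|mZ]) ω) P := by
    have := integrable_mul_of_memL2 hY hgZ2
    exact this
  -- pull-out identities
  have pull1 : P[g * Y|mXZ] =ᵐ[P] g * P[Y|mXZ] :=
    condExp_mul_of_stronglyMeasurable_left hgm hgY_int hYint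
  have pull2 : P[(P[g|mZ]) * Y|mZ] =ᵐ[P] (P[g|mZ]) * P[Y|mZ] :=
    condExp_mul_of_stronglyMeasurable_left stronglyMeasurable_condExp hB_int hYint
  have tower : P[P[Y|mXZ]|mZ] =ᵐ[P] P[Y|mZ] := condExp_condExp_of_le hZ hXZ
  -- the second term in the covariance
  have hBfun : (fun ω => (P[P[Y|mXZ]|mZ]) ω * (P[g|mZ]) ω)
      =ᵐ[P] P[(P[g|mZ]) * Y|mZ] := by
    filter_upwards [tower, pull2] with ω h1 h2
    simp only [Pi.mul_apply] at h2 ⊢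
    rw [h1, h2, mul_comm]
  have hBint : Integrable (fun ω => (P[P[Y|mXZ]|mZ]) ω * (P[g|mZ]) ω) P :=
    (integrable_condExp).congr hBfun.symm
  -- compute the first integral
  have hI1 : ∫ ω, (P[(P[Y|mXZ]) * g|mZ]) ω ∂P = ∫ ω, Y ω * g ω ∂P := by
    rw [integral_condExp hm]
    have h1 : ∫ ω, ((P[Y|mXZ]) * g) ω ∂P = ∫ ω, (P[g * Y|mXZ]) ω ∂P := by
      refine integral_congr_ae ?_
      filter_upwards [pull1] with ω hω
      simp only [Pi.mul_apply] at hω ⊢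
      rw [hω, mul_comm]
    rw [h1, integral_condExp hXZ]
    exact integral_congr_ae (Filter.Eventually.of_forall fun ω => by
      simp [mul_comm])
  -- compute the second integral
  have hI2 : ∫ ω, (P[P[Y|mXZ]|mZ]) ω * (P[g|mZ]) ω ∂P
      = ∫ ω, Y ω * (P[g|mZ]) ω ∂P := by
    rw [integral_congr_ae hBfun, integral_condExp hm]
    exact integral_congr_ae (Filter.Eventually.of_forall fun ω => by
      simp [mul_comm])
  -- put everything together
  rw [integral_sub integrable_condExp hBint, hI1, hI2]
  rw [show (fun ω => Y ω * (g ω - (P[g|mZ]) ω))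
      = fun ω => Y ω * g ω - Y ω * (P[g|mZ]) ω from funext fun ω => mul_sub _ _ _]
  rw [integral_sub hYg_int hYgZ_int]
end

section
/- The χ² divergence between two multivariate Gaussian distributions P = N(a₁, Σ₁) and Q = N(a₂, Σ₂) on ℝ^d, whenever 2Σ₂ - Σ₁ is positive definite, equals |Σ₂| / (|Σ₁|^{1/2} |2Σ₂ - Σ₁|^{1/2}) · exp{(a₁-a₂)ᵀ (2Σ₂ - Σ₁)^{-1} (a₁-a₂)} - 1. -/
open MeasureTheory Matrix Real

/-- Density of the multivariate Gaussian `N(a, S)` on `ℝ^d` (w.r.t. Lebesgue measure). -/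
noncomputable def gaussDensity (d : ℕ) (a : Fin d → ℝ) (S : Matrix (Fin d) (Fin d) ℝ)
    (x : Fin d → ℝ) : ℝ :=
  (2 * Real.pi) ^ (-(d : ℝ) / 2) * S.det ^ (-(1 : ℝ) / 2) *
    Real.exp (-(1 / 2) * ((x - a) ⬝ᵥ S⁻¹.mulVec (x - a)))

section Helpers

variable {d : ℕ}


lemma posDef_conj {N B : Matrix (Fin d) (Fin d) ℝ} (hN : N.PosDef) (hB : B.det ≠ 0) :
    (Bᵀ * N * B).PosDef := by
  have hNt : Nᵀ = N := by
    have h := hN.isHermitian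
    rwa [Matrix.IsHermitian, conjTranspose_eq_transpose_of_trivial] at h
  refine Matrix.PosDef.of_dotProduct_mulVec_pos ?_ ?_
  · show _ᴴ = _
    rw [conjTranspose_eq_transpose_of_trivial]
    simp [transpose_mul, hNt, Matrix.mul_assoc]
  · intro x hx
    have hBx : B.mulVec x ≠ 0 := fun hc => hx (Matrix.eq_zero_of_mulVec_eq_zero hB hc)
    have := hN.dotProduct_mulVec_pos hBx
    simpa [Matrix.mul_assoc, ← mulVec_mulVec, dotProduct_mulVec, vecMul_transpose,
      star_trivial] using this

open scoped MatrixOrder in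
lemma sqrt_package {S : Matrix (Fin d) (Fin d) ℝ} (hS : S.PosDef) :
    ∃ R : Matrix (Fin d) (Fin d) ℝ, Rᵀ = R ∧ R * R = S ∧ R.det ≠ 0 := by
  refine ⟨CFC.sqrt S, ?_, CFC.sqrt_mul_sqrt_self S (Matrix.nonneg_iff_posSemidef.mpr hS.posSemidef), ?_⟩
  · have h := (Matrix.nonneg_iff_posSemidef.mp (CFC.sqrt_nonneg S)).isHermitian
    rwa [Matrix.IsHermitian, conjTranspose_eq_transpose_of_trivial] at h
  · intro hc
    have : S.det = 0 := by
      rw [← CFC.sqrt_mul_sqrt_self S (Matrix.nonneg_iff_posSemidef.mpr hS.posSemidef), det_mul, hc, mul_zero]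
    exact hS.det_pos.ne' this

lemma gauss_int {S : Matrix (Fin d) (Fin d) ℝ} (hS : S.PosDef) :
    ∫ x : Fin d → ℝ, rexp (-(1/2) * (x ⬝ᵥ S⁻¹.mulVec x))
      = Real.sqrt S.det * Real.sqrt (2*π) ^ d := by
  obtain ⟨R, hRt, hRR, hRdet⟩ := sqrt_package hS
  set f : (Fin d → ℝ) → ℝ := fun x => rexp (-(1/2) * (x ⬝ᵥ S⁻¹.mulVec x)) with hf
  have hSdet : S.det ≠ 0 := hS.det_pos.ne'
  have hf_cont : Continuous f := by
    apply Real.continuous_exp.comp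
    apply Continuous.mul continuous_const
    unfold dotProduct
    apply continuous_finset_sum
    intro i _
    apply Continuous.mul (continuous_apply i)
    unfold Matrix.mulVec dotProduct
    apply continuous_finset_sum
    intro j _
    exact (continuous_const.mul (continuous_apply j))
  have key : Measure.map (Matrix.toLin' R) volume
      = ENNReal.ofReal |R.det⁻¹| • volume :=
    Real.map_matrix_volume_pi_eq_smul_volume_pi hRdet
  have hcomp : ∀ y : Fin d → ℝ, f (R.mulVec y) = rexp (-(1/2) * (y ⬝ᵥ y)) := by
    intro y
    have hq : (R.mulVec y) ⬝ᵥ (S⁻¹.mulVec (R.mulVec y)) = y ⬝ᵥ y := by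
      rw [mulVec_mulVec, ← vecMul_transpose, hRt, dotProduct_mulVec, vecMul_vecMul,
        ← Matrix.mul_assoc]
      have : R * S⁻¹ * R = 1 := by
        rw [← hRR, Matrix.mul_inv_rev, ← Matrix.mul_assoc,
          Matrix.mul_nonsing_inv _ hRdet.isUnit, Matrix.one_mul,
          Matrix.nonsing_inv_mul _ hRdet.isUnit]
      rw [this, Matrix.vecMul_one]
    rw [hf]; simp only [hq]
  have h1 : ∫ y, f (R.mulVec y) = |R.det|⁻¹ * ∫ x, f x := by
    have := integral_map (μ := volume) (φ := Matrix.toLin' R)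
      (Continuous.aemeasurable (LinearMap.continuous_of_finiteDimensional _))
      (hf_cont.aestronglyMeasurable)
    rw [key, integral_smul_measure, ENNReal.toReal_ofReal (abs_nonneg _), abs_inv,
      smul_eq_mul] at this
    simp only [Matrix.toLin'_apply] at this
    rw [← this]
  have h2 : ∫ y : Fin d → ℝ, f (R.mulVec y) = Real.sqrt (2*π) ^ d := by
    simp_rw [hcomp]
    have : ∀ y : Fin d → ℝ, rexp (-(1/2) * (y ⬝ᵥ y))
        = ∏ i, rexp (-(1/2) * (y i)^2) := by
      intro y
      rw [← Real.exp_sum]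
      congr 1
      rw [dotProduct, Finset.mul_sum]
      congr 1; ext i; ring
    simp_rw [this]
    rw [MeasureTheory.volume_pi, integral_fintype_prod_eq_pow (ι := Fin d) (fun t : ℝ => rexp (-(1/2) * t^2))]
    rw [show (∫ t : ℝ, rexp (-(1/2) * t^2)) = Real.sqrt (π / (1/2)) from
      integral_gaussian (1/2)]
    norm_num [Fintype.card_fin, mul_comm]
  have habs : |R.det| = Real.sqrt S.det := by
    rw [← Real.sqrt_sq_eq_abs]
    congr 1
    rw [pow_two, ← det_mul, hRR]
  have hfin : ∫ x, f x = |R.det| * Real.sqrt (2*π) ^ d := by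
    rw [← h2, h1, ← mul_assoc, mul_inv_cancel₀ (abs_ne_zero.2 hRdet), one_mul]
  rw [hfin, habs]

lemma M_posDef {S₁ S₂ : Matrix (Fin d) (Fin d) ℝ}
    (h1 : S₁.PosDef) (h2 : S₂.PosDef) (h3 : ((2:ℝ) • S₂ - S₁).PosDef) :
    ((2:ℝ) • S₁⁻¹ - S₂⁻¹).PosDef := by
  obtain ⟨V, hVt, hVV, hVdet⟩ := sqrt_package h2
  have h1det : S₁.det ≠ 0 := h1.det_pos.ne'
  have hVinvdet : V⁻¹.det ≠ 0 := by
    simp [Matrix.det_nonsing_inv, Ring.inverse_eq_inv', hVdet]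
  have hVinvt : V⁻¹ᵀ = V⁻¹ := by rw [Matrix.transpose_nonsing_inv, hVt]
  have hVinvV : V⁻¹ * V = 1 := Matrix.nonsing_inv_mul _ hVdet.isUnit
  have hVVinv : V * V⁻¹ = 1 := Matrix.mul_nonsing_inv _ hVdet.isUnit
  set W := V * S₁⁻¹ * V with hWdef
  have hW : W.PosDef := by
    have := posDef_conj h1.inv hVdet
    rwa [hVt] at this
  obtain ⟨Z, hZt, hZZ, hZdet⟩ := sqrt_package hW
  have hWdet : W.det ≠ 0 := hW.det_pos.ne'
  have step1 : (V⁻¹ * ((2:ℝ) • S₂ - S₁) * V⁻¹).PosDef := by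
    have := posDef_conj h3 hVinvdet
    rwa [hVinvt] at this
  have eq1 : V⁻¹ * ((2:ℝ) • S₂ - S₁) * V⁻¹ = (2:ℝ) • (1 : Matrix (Fin d) (Fin d) ℝ) - W⁻¹ := by
    have hWinv : W⁻¹ = V⁻¹ * S₁ * V⁻¹ := by
      rw [hWdef, Matrix.mul_inv_rev, Matrix.mul_inv_rev,
        Matrix.nonsing_inv_nonsing_inv _ h1det.isUnit, Matrix.mul_assoc]
    have e : V⁻¹ * S₂ * V⁻¹ = 1 := by
      rw [← hVV, ← Matrix.mul_assoc, hVinvV, Matrix.one_mul, hVVinv]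
    rw [hWinv, Matrix.mul_sub, Matrix.sub_mul, Matrix.mul_smul, Matrix.smul_mul, e]
  rw [eq1] at step1
  have step2 : (Z * ((2:ℝ) • (1 : Matrix (Fin d) (Fin d) ℝ) - W⁻¹) * Z).PosDef := by
    have := posDef_conj step1 hZdet
    rwa [hZt] at this
  have eq2 : Z * ((2:ℝ) • (1 : Matrix (Fin d) (Fin d) ℝ) - W⁻¹) * Z
      = (2:ℝ) • W - 1 := by
    have hZWZ : Z * W⁻¹ * Z = 1 := by
      rw [← hZZ, Matrix.mul_inv_rev, ← Matrix.mul_assoc,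
        Matrix.mul_nonsing_inv _ hZdet.isUnit, Matrix.one_mul,
        Matrix.nonsing_inv_mul _ hZdet.isUnit]
    rw [Matrix.mul_sub, Matrix.sub_mul, Matrix.mul_smul, Matrix.smul_mul, Matrix.mul_one,
      hZZ, hZWZ]
  rw [eq2] at step2
  have step3 : (V⁻¹ * ((2:ℝ) • W - 1) * V⁻¹).PosDef := by
    have := posDef_conj step2 hVinvdet
    rwa [hVinvt] at this
  have eq3 : V⁻¹ * ((2:ℝ) • W - 1) * V⁻¹ = (2:ℝ) • S₁⁻¹ - S₂⁻¹ := by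
    have hS₂inv : S₂⁻¹ = V⁻¹ * V⁻¹ := by rw [← hVV, Matrix.mul_inv_rev]
    have g : V⁻¹ * W * V⁻¹ = S₁⁻¹ := by
      rw [hWdef, ← Matrix.mul_assoc, ← Matrix.mul_assoc, hVinvV, Matrix.one_mul,
        Matrix.mul_assoc, hVVinv, Matrix.mul_one]
    rw [Matrix.mul_sub, Matrix.sub_mul, Matrix.mul_smul, Matrix.smul_mul, Matrix.mul_one,
      g, hS₂inv]
  rwa [eq3] at step3

lemma dot_symm {T : Matrix (Fin d) (Fin d) ℝ} (hT : Tᵀ = T) (u v : Fin d → ℝ) :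
    u ⬝ᵥ T.mulVec v = v ⬝ᵥ T.mulVec u := by
  rw [dotProduct_mulVec]
  conv_lhs => rw [← hT]
  rw [vecMul_transpose, dotProduct_comm]

lemma dot_shift (T : Matrix (Fin d) (Fin d) ℝ) (a u : Fin d → ℝ) :
    (T.mulVec a) ⬝ᵥ u = a ⬝ᵥ Tᵀ.mulVec u := by
  rw [← vecMul_transpose, dotProduct_mulVec]

lemma quad_expand {T : Matrix (Fin d) (Fin d) ℝ} (hT : Tᵀ = T) (x a : Fin d → ℝ) :
    (x - a) ⬝ᵥ T.mulVec (x - a)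
      = x ⬝ᵥ T.mulVec x - 2*(x ⬝ᵥ T.mulVec a) + a ⬝ᵥ T.mulVec a := by
  rw [Matrix.mulVec_sub, sub_dotProduct, dotProduct_sub, dotProduct_sub,
    dot_symm hT a x]
  ring

lemma exponent_id {A B M : Matrix (Fin d) (Fin d) ℝ}
    (hAt : Aᵀ = A) (hBt : Bᵀ = B) (hMt : Mᵀ = M)
    (hMdef : M = (2:ℝ) • A - B) {a₁ a₂ m : Fin d → ℝ}
    (hm : M.mulVec m = (2:ℝ) • (A.mulVec a₁) - B.mulVec a₂) (x : Fin d → ℝ) :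
    -((x-a₁) ⬝ᵥ A.mulVec (x-a₁)) + (1/2)*((x-a₂) ⬝ᵥ B.mulVec (x-a₂))
      = -(1/2)*((x-m) ⬝ᵥ M.mulVec (x-m))
        + (-(a₁ ⬝ᵥ A.mulVec a₁) + (1/2)*(a₂ ⬝ᵥ B.mulVec a₂) + (1/2)*(m ⬝ᵥ M.mulVec m)) := by
  rw [quad_expand hAt, quad_expand hBt, quad_expand hMt]
  have e1 : x ⬝ᵥ M.mulVec x = 2*(x ⬝ᵥ A.mulVec x) - x ⬝ᵥ B.mulVec x := by
    rw [hMdef, Matrix.sub_mulVec, Matrix.smul_mulVec, dotProduct_sub,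
      dotProduct_smul]
    simp [smul_eq_mul]
  have e2 : x ⬝ᵥ M.mulVec m = 2*(x ⬝ᵥ A.mulVec a₁) - x ⬝ᵥ B.mulVec a₂ := by
    rw [hm, dotProduct_sub, dotProduct_smul]
    simp [smul_eq_mul]
  rw [e1, e2]
  ring



lemma const_eq (d : ℕ) (s1 s2 c : ℝ) (h1 : 0 < s1) (h2 : 0 < s2) (hc : 0 < c) :
    ((2*π) ^ (-(d:ℝ)/2) * s1 ^ (-(1:ℝ)/2))^2 / ((2*π) ^ (-(d:ℝ)/2) * s2 ^ (-(1:ℝ)/2))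
      * (Real.sqrt (s1*s2/c) * Real.sqrt (2*π) ^ d)
    = s2 / (Real.sqrt s1 * Real.sqrt c) := by
  have h2pi : (0:ℝ) < 2*π := by positivity
  have e1 : (2*π) ^ (-(d:ℝ)/2) = (Real.sqrt (2*π) ^ d)⁻¹ := by
    rw [← Real.rpow_natCast (Real.sqrt (2*π)) d, Real.sqrt_eq_rpow,
      ← Real.rpow_mul h2pi.le, ← Real.rpow_neg h2pi.le]
    congr 1
    ring
  have e2 : ∀ s : ℝ, 0 < s → s ^ (-(1:ℝ)/2) = (Real.sqrt s)⁻¹ := by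
    intro s hs
    rw [show (-(1:ℝ)/2) = -(1/2) by norm_num, Real.rpow_neg hs.le, ← Real.sqrt_eq_rpow]
  have e3 : Real.sqrt (s1*s2/c) = Real.sqrt s1 * Real.sqrt s2 / Real.sqrt c := by
    rw [Real.sqrt_div (by positivity), Real.sqrt_mul h1.le]
  rw [e1, e2 s1 h1, e2 s2 h2, e3]
  have p1 : Real.sqrt s1 > 0 := Real.sqrt_pos.2 h1
  have p2 : Real.sqrt s2 > 0 := Real.sqrt_pos.2 h2
  have p3 : Real.sqrt c > 0 := Real.sqrt_pos.2 hc
  have p4 : Real.sqrt (2*π) ^ d > 0 := by positivity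
  have q1 : Real.sqrt s1 * Real.sqrt s1 = s1 := Real.mul_self_sqrt h1.le
  have q2 : Real.sqrt s2 * Real.sqrt s2 = s2 := Real.mul_self_sqrt h2.le
  field_simp
  ring_nf
  rw [Real.sq_sqrt h2.le]

end Helpers

/-- χ²-divergence between two multivariate Gaussians:
`χ²(N(a₁,Σ₁) ‖ N(a₂,Σ₂)) = ∫ p²/q - 1
  = |Σ₂| / (|Σ₁|^{1/2} |2Σ₂-Σ₁|^{1/2}) · exp((a₁-a₂)ᵀ(2Σ₂-Σ₁)⁻¹(a₁-a₂)) - 1`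
whenever `2Σ₂ - Σ₁` is positive definite. -/
theorem stmt10 {d : ℕ} (a₁ a₂ : Fin d → ℝ) (S₁ S₂ : Matrix (Fin d) (Fin d) ℝ)
    (h1 : S₁.PosDef) (h2 : S₂.PosDef) (h3 : ((2 : ℝ) • S₂ - S₁).PosDef) :
    (∫ x : Fin d → ℝ, (gaussDensity d a₁ S₁ x)^2 / gaussDensity d a₂ S₂ x) - 1
      = S₂.det / (Real.sqrt S₁.det * Real.sqrt ((2 : ℝ) • S₂ - S₁).det) *
          Real.exp ((a₁ - a₂) ⬝ᵥ ((2 : ℝ) • S₂ - S₁)⁻¹.mulVec (a₁ - a₂)) - 1 := by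
  have h1d : S₁.det ≠ 0 := h1.det_pos.ne'
  have h2d : S₂.det ≠ 0 := h2.det_pos.ne'
  have hM : ((2:ℝ) • S₁⁻¹ - S₂⁻¹).PosDef := M_posDef h1 h2 h3
  set C := (2:ℝ) • S₂ - S₁ with hCdef
  have h3d : C.det ≠ 0 := h3.det_pos.ne'
  set M := (2:ℝ) • S₁⁻¹ - S₂⁻¹ with hMdef
  have hMd : M.det ≠ 0 := hM.det_pos.ne'
  have htr : ∀ (T : Matrix (Fin d) (Fin d) ℝ), T.PosDef → Tᵀ = T := by
    intro T hT
    have h := hT.isHermitian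
    rwa [Matrix.IsHermitian, conjTranspose_eq_transpose_of_trivial] at h
  have hAt := htr _ h1.inv
  have hBt := htr _ h2.inv
  have hMt := htr _ hM
  have hMinvt := htr _ hM.inv
  -- key matrix identities
  have hMACB : M = S₁⁻¹ * C * S₂⁻¹ := by
    have : S₁⁻¹ * C * S₂⁻¹ = M := by
      rw [hCdef, hMdef, Matrix.mul_sub, Matrix.sub_mul, Matrix.mul_smul, Matrix.smul_mul,
        Matrix.mul_assoc S₁⁻¹ S₂ S₂⁻¹, Matrix.mul_nonsing_inv _ h2d.isUnit, Matrix.mul_one,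
        Matrix.nonsing_inv_mul _ h1d.isUnit, Matrix.one_mul]
    exact this.symm
  have hMinv : M⁻¹ = S₂ * (C⁻¹ * S₁) := by
    rw [hMACB, Matrix.mul_inv_rev, Matrix.mul_inv_rev,
      Matrix.nonsing_inv_nonsing_inv _ h2d.isUnit, Matrix.nonsing_inv_nonsing_inv _ h1d.isUnit]
  have hBMB : S₂⁻¹ * M⁻¹ * S₂⁻¹ = (2:ℝ) • C⁻¹ - S₂⁻¹ := by
    have hS1 : S₁ = (2:ℝ) • S₂ - C := by rw [hCdef]; abel
    rw [hMinv, ← Matrix.mul_assoc, ← Matrix.mul_assoc, Matrix.nonsing_inv_mul _ h2d.isUnit,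
      Matrix.one_mul]
    rw [Matrix.mul_assoc, hS1, Matrix.sub_mul, Matrix.smul_mul,
      Matrix.mul_nonsing_inv _ h2d.isUnit, Matrix.mul_sub, Matrix.mul_smul, Matrix.mul_one,
      ← Matrix.mul_assoc, Matrix.nonsing_inv_mul _ h3d.isUnit, Matrix.one_mul]
  -- vectors
  set w := a₁ - a₂ with hw
  set v := (2:ℝ) • (S₁⁻¹.mulVec a₁) - S₂⁻¹.mulVec a₂ with hv
  set m := M⁻¹.mulVec v with hm
  have hMm : M.mulVec m = v := by
    rw [hm, mulVec_mulVec, Matrix.mul_nonsing_inv _ hMd.isUnit, Matrix.one_mulVec]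
  set k := -(a₁ ⬝ᵥ S₁⁻¹.mulVec a₁) + (1/2)*(a₂ ⬝ᵥ S₂⁻¹.mulVec a₂) + (1/2)*(m ⬝ᵥ M.mulVec m)
    with hkdef
  have hv2 : v = M.mulVec a₁ + S₂⁻¹.mulVec w := by
    rw [hv, hw, hMdef]
    simp [Matrix.sub_mulVec, Matrix.mulVec_sub, Matrix.smul_mulVec]
  have hmMm : m ⬝ᵥ M.mulVec m = v ⬝ᵥ M⁻¹.mulVec v := by
    rw [hMm, hm, dotProduct_comm]
  have hMinvM : ∀ u : Fin d → ℝ, M⁻¹.mulVec (M.mulVec u) = u := by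
    intro u; rw [mulVec_mulVec, Matrix.nonsing_inv_mul _ hMd.isUnit, Matrix.one_mulVec]
  have hvMv : v ⬝ᵥ M⁻¹.mulVec v
      = a₁ ⬝ᵥ M.mulVec a₁ + 2*(a₁ ⬝ᵥ S₂⁻¹.mulVec w)
        + w ⬝ᵥ ((2:ℝ) • C⁻¹ - S₂⁻¹).mulVec w := by
    rw [hv2, Matrix.mulVec_add, add_dotProduct, dotProduct_add,
      dotProduct_add]
    have t1 : (M.mulVec a₁) ⬝ᵥ M⁻¹.mulVec (M.mulVec a₁) = a₁ ⬝ᵥ M.mulVec a₁ := by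
      rw [hMinvM, dotProduct_comm]
    have t2 : (M.mulVec a₁) ⬝ᵥ M⁻¹.mulVec (S₂⁻¹.mulVec w) = a₁ ⬝ᵥ S₂⁻¹.mulVec w := by
      rw [dot_symm hMinvt, hMinvM, dotProduct_comm]
    have t3 : (S₂⁻¹.mulVec w) ⬝ᵥ M⁻¹.mulVec (M.mulVec a₁) = a₁ ⬝ᵥ S₂⁻¹.mulVec w := by
      rw [hMinvM, dotProduct_comm]
    have t4 : (S₂⁻¹.mulVec w) ⬝ᵥ M⁻¹.mulVec (S₂⁻¹.mulVec w)
        = w ⬝ᵥ ((2:ℝ) • C⁻¹ - S₂⁻¹).mulVec w := by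
      rw [← hBMB, mulVec_mulVec, dot_shift, hBt, mulVec_mulVec, ← Matrix.mul_assoc]
    rw [t1, t2, t3, t4]; ring
  have hk : k = w ⬝ᵥ C⁻¹.mulVec w := by
    rw [hkdef, hmMm, hvMv]
    have ea2 : a₂ = a₁ - w := by rw [hw]; abel
    have eB : a₂ ⬝ᵥ S₂⁻¹.mulVec a₂
        = a₁ ⬝ᵥ S₂⁻¹.mulVec a₁ - 2*(a₁ ⬝ᵥ S₂⁻¹.mulVec w) + w ⬝ᵥ S₂⁻¹.mulVec w := by
      conv_lhs => rw [ea2]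
      exact quad_expand hBt a₁ w
    have eM : a₁ ⬝ᵥ M.mulVec a₁
        = 2*(a₁ ⬝ᵥ S₁⁻¹.mulVec a₁) - a₁ ⬝ᵥ S₂⁻¹.mulVec a₁ := by
      rw [hMdef, Matrix.sub_mulVec, Matrix.smul_mulVec, dotProduct_sub,
        dotProduct_smul]
      simp [smul_eq_mul]
    have eC : w ⬝ᵥ ((2:ℝ) • C⁻¹ - S₂⁻¹).mulVec w
        = 2*(w ⬝ᵥ C⁻¹.mulVec w) - w ⬝ᵥ S₂⁻¹.mulVec w := by
      rw [Matrix.sub_mulVec, Matrix.smul_mulVec, dotProduct_sub, dotProduct_smul]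
      simp [smul_eq_mul]
    rw [eB, eM, eC]; ring
  -- pointwise identity
  set c₁ := (2*π) ^ (-(d:ℝ)/2) * S₁.det ^ (-(1:ℝ)/2) with hc1
  set c₂ := (2*π) ^ (-(d:ℝ)/2) * S₂.det ^ (-(1:ℝ)/2) with hc2
  have hc2pos : 0 < c₂ := by
    rw [hc2]
    exact mul_pos (Real.rpow_pos_of_pos (by positivity) _)
      (Real.rpow_pos_of_pos h2.det_pos _)
  have hpt : ∀ x : Fin d → ℝ, (gaussDensity d a₁ S₁ x)^2 / gaussDensity d a₂ S₂ x
      = (c₁^2/c₂ * Real.exp k) * rexp (-(1/2) * ((x - m) ⬝ᵥ M.mulVec (x - m))) := by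
    intro x
    unfold gaussDensity
    rw [← hc1, ← hc2, mul_pow, pow_two (rexp _), ← Real.exp_add, mul_div_mul_comm,
      ← Real.exp_sub]
    have hexp := exponent_id hAt hBt hMt hMdef (hv ▸ hMm) x
    have harg : (-(1 / 2) * ((x - a₁) ⬝ᵥ S₁⁻¹.mulVec (x - a₁))
          + -(1 / 2) * ((x - a₁) ⬝ᵥ S₁⁻¹.mulVec (x - a₁)))
          - (-(1 / 2) * ((x - a₂) ⬝ᵥ S₂⁻¹.mulVec (x - a₂)))
        = -(1/2)*((x - m) ⬝ᵥ M.mulVec (x - m)) + k := by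
      calc _ = -((x-a₁) ⬝ᵥ S₁⁻¹.mulVec (x-a₁))
            + (1/2)*((x-a₂) ⬝ᵥ S₂⁻¹.mulVec (x-a₂)) := by ring
        _ = _ := by rw [hexp, hkdef]
    rw [harg, Real.exp_add]
    ring
  -- the integral
  have hint : (∫ x : Fin d → ℝ, (gaussDensity d a₁ S₁ x)^2 / gaussDensity d a₂ S₂ x)
      = (c₁^2/c₂ * Real.exp k) * (Real.sqrt (M⁻¹.det) * Real.sqrt (2*π) ^ d) := by
    simp_rw [hpt]
    rw [MeasureTheory.integral_const_mul]
    congr 1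
    rw [integral_sub_right_eq_self (μ := volume)
      (fun y : Fin d → ℝ => rexp (-(1/2) * (y ⬝ᵥ M.mulVec y))) m]
    have g := gauss_int hM.inv
    rwa [Matrix.nonsing_inv_nonsing_inv _ hMd.isUnit] at g
  rw [hint, hk]
  congr 1
  have hdetM : M⁻¹.det = S₁.det * S₂.det / C.det := by
    rw [hMinv, det_mul, det_mul, Matrix.det_nonsing_inv]
    simp [Ring.inverse_eq_inv']
    field_simp
  rw [hdetM]
  calc c₁^2/c₂ * Real.exp (w ⬝ᵥ C⁻¹.mulVec w)
        * (Real.sqrt (S₁.det * S₂.det / C.det) * Real.sqrt (2*π) ^ d)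
      = (c₁^2/c₂ * (Real.sqrt (S₁.det * S₂.det / C.det) * Real.sqrt (2*π) ^ d))
        * Real.exp (w ⬝ᵥ C⁻¹.mulVec w) := by ring
    _ = S₂.det / (Real.sqrt S₁.det * Real.sqrt C.det) * Real.exp (w ⬝ᵥ C⁻¹.mulVec w) := by
        rw [hc1, hc2, const_eq d S₁.det S₂.det C.det h1.det_pos h2.det_pos h3.det_pos]
end

section
/- Let W = (W₁, W₂) where W₁ ~ N(0,1), W₂ = W₁² + ε₁ with ε₁ ~ N(0,1) independent of W₁, and Y = W₁² + ε₂ with ε₂ ~ N(0,1) independent of (W₁, ε₁). Then the best linear projection coefficients (E[WᵀW])^{-1} E[WᵀY] equal (0, 3/4): the coefficient on the non-null variable W₁ is zero while the coefficient on the null variable W₂ (which satisfies W₂ ⊥ Y | W₁) is 3/4. -/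
open MeasureTheory ProbabilityTheory Matrix Real
open scoped ENNReal NNReal

namespace Stmt16Aux

lemma pdf_eq (x : ℝ) : gaussianPDFReal 0 1 x = (√(2*π))⁻¹ * rexp (-x^2/2) := by
  simp [gaussianPDFReal]

lemma gauss_withDensity :
    gaussianReal 0 1 = (volume : Measure ℝ).withDensity
      (fun x => ((gaussianPDFReal 0 1 x).toNNReal : ℝ≥0∞)) := by
  rw [gaussianReal_of_var_ne_zero 0 one_ne_zero]; rfl

lemma integral_gauss (g : ℝ → ℝ) :
    ∫ x, g x ∂(gaussianReal 0 1) = ∫ x, gaussianPDFReal 0 1 x * g x := by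
  rw [gauss_withDensity,
    integral_withDensity_eq_integral_smul ((measurable_gaussianPDFReal 0 1).real_toNNReal)]
  congr 1; ext x
  simp [NNReal.smul_def, Real.coe_toNNReal _ (gaussianPDFReal_nonneg 0 1 x)]

end Stmt16Aux

namespace Stmt16Aux
open Set

lemma mom_odd {k : ℕ} (hk : Odd k) : ∫ x, x ^ k ∂(gaussianReal 0 1) = 0 := by
  rw [integral_gauss]
  set f : ℝ → ℝ := fun x => gaussianPDFReal 0 1 x * x ^ k with hf
  have hodd : ∀ x, f (-x) = - f x := by
    intro x
    simp only [hf, pdf_eq, neg_sq, hk.neg_pow]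
    ring
  have hmap : ∫ x, f x = ∫ x, f (-x) := by
    conv_lhs => rw [← Measure.map_neg_eq_self (volume : Measure ℝ)]
    exact (Homeomorph.neg ℝ).measurableEmbedding.integral_map f
  have : ∫ x, f (-x) = - ∫ x, f x := by
    simp_rw [hodd]; exact integral_neg f
  linarith [hmap, this]

lemma mom_even_aux (n : ℕ) :
    ∫ x, x ^ (2*n) ∂(gaussianReal 0 1)
      = 2 * ((√(2*π))⁻¹ * ∫ x in Set.Ioi (0:ℝ), x ^ (2*n) * rexp (-(1/2) * x^2)) := by
  rw [integral_gauss]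
  have h : ∀ x : ℝ, gaussianPDFReal 0 1 x * x ^ (2*n)
      = (fun t : ℝ => (√(2*π))⁻¹ * (t ^ (2*n) * rexp (-(1/2) * t^2))) |x| := by
    intro x
    simp only [pdf_eq, pow_mul, sq_abs]
    rw [show -x^2/2 = -(1/2) * x^2 by ring]
    ring
  simp_rw [h]
  rw [integral_comp_abs (f := fun t : ℝ => (√(2*π))⁻¹ * (t ^ (2*n) * rexp (-(1/2) * t^2))),
    integral_const_mul]

end Stmt16Aux

namespace Stmt16Aux
open Set
lemma ioi_two : ∫ x in Ioi (0:ℝ), x ^ (2:ℕ) * rexp (-(1/2) * x^2) = √2 * √π / 2 := by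
  have h := integral_rpow_mul_exp_neg_mul_rpow (p := 2) (q := 2) (b := 1/2)
    two_pos (by norm_num) (by norm_num)
  have hc : ∀ x : ℝ, x ^ (2:ℝ) = x ^ (2:ℕ) := fun x => by
    rw [show (2:ℝ) = ((2:ℕ):ℝ) by norm_num, Real.rpow_natCast]
  simp_rw [hc] at h
  rw [h]
  have hG : Gamma ((2 + 1) / 2 : ℝ) = √π / 2 := by
    rw [show ((2+1)/2:ℝ) = 1/2 + 1 by norm_num, Gamma_add_one (by norm_num),
      Gamma_one_half_eq]; ring
  have hrp : ((1:ℝ)/2) ^ (-((2:ℝ)+1)/2 : ℝ) = 2 * √2 := by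
    rw [show (-((2:ℝ)+1)/2 : ℝ) = -(3/2) by norm_num,
      Real.rpow_neg (by norm_num), show ((1:ℝ)/2) = 2⁻¹ by norm_num,
      Real.inv_rpow (by norm_num), inv_inv,
      show (3/2 : ℝ) = (1/2) * (3:ℕ) by norm_num,
      Real.rpow_mul (by norm_num), Real.rpow_natCast, ← Real.sqrt_eq_rpow]
    rw [show (3:ℕ) = 2 + 1 by norm_num, pow_succ, sq_sqrt (by norm_num : (0:ℝ) ≤ 2)]
  rw [hG, hrp]; ring

lemma ioi_four : ∫ x in Ioi (0:ℝ), x ^ (4:ℕ) * rexp (-(1/2) * x^2) = 3 * (√2 * √π) / 2 := by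
  have h := integral_rpow_mul_exp_neg_mul_rpow (p := 2) (q := 4) (b := 1/2)
    two_pos (by norm_num) (by norm_num)
  have hc2 : ∀ x : ℝ, x ^ (2:ℝ) = x ^ (2:ℕ) := fun x => by
    rw [show (2:ℝ) = ((2:ℕ):ℝ) by norm_num, Real.rpow_natCast]
  have hc4 : ∀ x : ℝ, x ^ (4:ℝ) = x ^ (4:ℕ) := fun x => by
    rw [show (4:ℝ) = ((4:ℕ):ℝ) by norm_num, Real.rpow_natCast]
  simp_rw [hc2, hc4] at h
  rw [h]
  have hG : Gamma ((4 + 1) / 2 : ℝ) = 3 * √π / 4 := by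
    rw [show ((4+1)/2:ℝ) = (1/2 + 1) + 1 by norm_num, Gamma_add_one (by norm_num),
      Gamma_add_one (by norm_num), Gamma_one_half_eq]; ring
  have hrp : ((1:ℝ)/2) ^ (-((4:ℝ)+1)/2 : ℝ) = 4 * √2 := by
    rw [show (-((4:ℝ)+1)/2 : ℝ) = -(5/2) by norm_num,
      Real.rpow_neg (by norm_num), show ((1:ℝ)/2) = 2⁻¹ by norm_num,
      Real.inv_rpow (by norm_num), inv_inv,
      show (5/2 : ℝ) = (1/2) * (5:ℕ) by norm_num,
      Real.rpow_mul (by norm_num), Real.rpow_natCast, ← Real.sqrt_eq_rpow]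
    rw [show (5:ℕ) = 2 + 2 + 1 by norm_num]
    rw [pow_add, pow_add, pow_one, sq_sqrt (by norm_num : (0:ℝ) ≤ 2)]
    ring
  rw [hG, hrp]; ring


lemma mom_two : ∫ x, x ^ 2 ∂(gaussianReal 0 1) = 1 := by
  have h := mom_even_aux 1
  rw [show 2*1 = 2 by norm_num] at h
  rw [h, ioi_two, Real.sqrt_mul (by norm_num : (0:ℝ) ≤ 2) π]
  have h2 : (0:ℝ) < √2 := Real.sqrt_pos.mpr two_pos
  have hp : (0:ℝ) < √π := Real.sqrt_pos.mpr pi_pos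
  field_simp

lemma mom_four : ∫ x, x ^ 4 ∂(gaussianReal 0 1) = 3 := by
  have h := mom_even_aux 2
  rw [show 2*2 = 4 by norm_num] at h
  rw [h, ioi_four, Real.sqrt_mul (by norm_num : (0:ℝ) ≤ 2) π]
  have h2 : (0:ℝ) < √2 := Real.sqrt_pos.mpr two_pos
  have hp : (0:ℝ) < √π := Real.sqrt_pos.mpr pi_pos
  field_simp

end Stmt16Aux


namespace Stmt16Aux
open Set

lemma integrable_pow_gauss {k : ℕ} (hk : k ≤ 4) :
    Integrable (fun x : ℝ => x ^ k) (gaussianReal 0 1) := by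
  rw [gaussianReal_of_var_ne_zero 0 one_ne_zero,
    integrable_withDensity_iff (measurable_gaussianPDF 0 1)
      (ae_of_all _ fun x => ENNReal.ofReal_lt_top)]
  have hbd : Integrable (fun x : ℝ => (65 * (√(2*π))⁻¹) * rexp (-(1/4) * x^2)) :=
    (integrable_exp_neg_mul_sq (by norm_num : (0:ℝ) < 1/4)).const_mul _
  refine hbd.mono' ?_ (ae_of_all _ fun x => ?_)
  · exact ((measurable_id.pow_const k).mul
      (measurable_gaussianPDF 0 1).ennreal_toReal).aestronglyMeasurable
  · have hpdf : (gaussianPDF 0 1 x).toReal = gaussianPDFReal 0 1 x :=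
      ENNReal.toReal_ofReal (gaussianPDFReal_nonneg 0 1 x)
    have hc : (0:ℝ) ≤ (√(2*π))⁻¹ := by positivity
    have he : (0:ℝ) < rexp (-x^2/2) := Real.exp_pos _
    have h1 : |x| ^ k ≤ x ^ 4 + 1 := by
      rcases le_total |x| 1 with h | h
      · have h4 : (0:ℝ) ≤ x ^ 4 := by positivity
        have := pow_le_one₀ (n := k) (abs_nonneg x) h
        linarith
      · calc |x| ^ k ≤ |x| ^ 4 := pow_le_pow_right₀ h hk
          _ = x ^ 4 := by rw [← abs_pow, abs_of_nonneg (by positivity)]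
          _ ≤ x ^ 4 + 1 := by linarith
    have h2 : x ^ 4 + 1 ≤ 65 * rexp (x^2/4) := by
      have e := Real.add_one_le_exp (x^2/8)
      have esq : rexp (x^2/4) = rexp (x^2/8) ^ 2 := by
        rw [pow_two (rexp (x^2/8)), ← Real.exp_add]; congr 1; ring
      rw [esq]
      nlinarith [sq_nonneg x, sq_nonneg (x^2), Real.exp_pos (x^2/8), sq_nonneg (x^2 - 8)]
    have h3 : rexp (x^2/4) * rexp (-x^2/2) = rexp (-(1/4) * x^2) := by
      rw [← Real.exp_add]; ring_nf
    calc ‖x ^ k * (gaussianPDF 0 1 x).toReal‖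
        = |x| ^ k * ((√(2*π))⁻¹ * rexp (-x^2/2)) := by
          rw [hpdf, pdf_eq, Real.norm_eq_abs, abs_mul, abs_pow,
            abs_of_nonneg (show (0:ℝ) ≤ (√(2*π))⁻¹ * rexp (-x^2/2) by positivity)]
      _ ≤ (x ^ 4 + 1) * ((√(2*π))⁻¹ * rexp (-x^2/2)) :=
          mul_le_mul_of_nonneg_right h1 (by positivity)
      _ ≤ (65 * rexp (x^2/4)) * ((√(2*π))⁻¹ * rexp (-x^2/2)) :=
          mul_le_mul_of_nonneg_right h2 (by positivity)
      _ = (65 * (√(2*π))⁻¹) * rexp (-(1/4) * x^2) := by rw [← h3]; ring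

end Stmt16Aux

section Main
open Stmt16Aux

/-- Linear projection example: with `W₁, ε₁, ε₂` i.i.d. standard Gaussians,
`W₂ = W₁² + ε₁` and `Y = W₁² + ε₂`, the best linear projection coefficients
`(E[WᵀW])⁻¹ E[WᵀY]` equal `(0, 3/4)`. -/
theorem stmt16 {Ω : Type*} [MeasurableSpace Ω] (P : Measure Ω) [IsProbabilityMeasure P]
    (W1 e1 e2 : Ω → ℝ)
    (hW1 : Measurable W1) (he1 : Measurable e1) (he2 : Measurable e2)
    (hind : iIndepFun ![W1, e1, e2] P)
    (h1 : Measure.map W1 P = gaussianReal 0 1)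
    (h2 : Measure.map e1 P = gaussianReal 0 1)
    (h3 : Measure.map e2 P = gaussianReal 0 1) :
    let W2 : Ω → ℝ := fun ω => (W1 ω)^2 + e1 ω
    let Y : Ω → ℝ := fun ω => (W1 ω)^2 + e2 ω
    (Matrix.of ![![∫ ω, W1 ω * W1 ω ∂P, ∫ ω, W1 ω * W2 ω ∂P],
                 ![∫ ω, W2 ω * W1 ω ∂P, ∫ ω, W2 ω * W2 ω ∂P]])⁻¹.mulVec
        ![∫ ω, W1 ω * Y ω ∂P, ∫ ω, W2 ω * Y ω ∂P] = ![0, 3/4] := by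
  intro W2 Y
  have hW2 : W2 = fun ω => (W1 ω)^2 + e1 ω := rfl
  have hY : Y = fun ω => (W1 ω)^2 + e2 ω := rfl
  -- moments of the three variables
  have key : ∀ (X : Ω → ℝ), Measurable X → Measure.map X P = gaussianReal 0 1 →
      ∀ k : ℕ, ∫ ω, X ω ^ k ∂P = ∫ x, x ^ k ∂(gaussianReal 0 1) := by
    intro X hX hmap k
    rw [← hmap]
    exact (integral_map hX.aemeasurable
      (measurable_id.pow_const k).aestronglyMeasurable).symm
  have ikey : ∀ (X : Ω → ℝ), Measurable X → Measure.map X P = gaussianReal 0 1 →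
      ∀ k : ℕ, k ≤ 4 → Integrable (fun ω => X ω ^ k) P := by
    intro X hX hmap k hk
    have h : Integrable (fun x : ℝ => x ^ k) (Measure.map X P) := by
      rw [hmap]; exact integrable_pow_gauss hk
    exact (integrable_map_measure (measurable_id.pow_const k).aestronglyMeasurable
      hX.aemeasurable).mp h
  have mW1_1 : ∫ ω, W1 ω ∂P = 0 := by
    have ha := key W1 hW1 h1 1
    have hb := mom_odd (by decide : Odd 1)
    simp only [pow_one] at ha hb
    rw [ha, hb]
  have me1_1 : ∫ ω, e1 ω ∂P = 0 := by
    have ha := key e1 he1 h2 1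
    have hb := mom_odd (by decide : Odd 1)
    simp only [pow_one] at ha hb
    rw [ha, hb]
  have me2_1 : ∫ ω, e2 ω ∂P = 0 := by
    have ha := key e2 he2 h3 1
    have hb := mom_odd (by decide : Odd 1)
    simp only [pow_one] at ha hb
    rw [ha, hb]
  have mW1_2 : ∫ ω, W1 ω ^ 2 ∂P = 1 := by rw [key W1 hW1 h1 2, mom_two]
  have me1_2 : ∫ ω, e1 ω ^ 2 ∂P = 1 := by rw [key e1 he1 h2 2, mom_two]
  have mW1_3 : ∫ ω, W1 ω ^ 3 ∂P = 0 := by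
    rw [key W1 hW1 h1 3, mom_odd (by decide : Odd 3)]
  have mW1_4 : ∫ ω, W1 ω ^ 4 ∂P = 3 := by rw [key W1 hW1 h1 4, mom_four]
  -- integrability
  have iW1_1 : Integrable W1 P := by
    have := ikey W1 hW1 h1 1 (by norm_num); simpa using this
  have ie1_1 : Integrable e1 P := by
    have := ikey e1 he1 h2 1 (by norm_num); simpa using this
  have ie2_1 : Integrable e2 P := by
    have := ikey e2 he2 h3 1 (by norm_num); simpa using this
  have iW1_2 : Integrable (fun ω => W1 ω ^ 2) P := ikey W1 hW1 h1 2 (by norm_num)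
  have ie1_2 : Integrable (fun ω => e1 ω ^ 2) P := ikey e1 he1 h2 2 (by norm_num)
  have iW1_3 : Integrable (fun ω => W1 ω ^ 3) P := ikey W1 hW1 h1 3 (by norm_num)
  have iW1_4 : Integrable (fun ω => W1 ω ^ 4) P := ikey W1 hW1 h1 4 (by norm_num)
  -- independence
  have h01 : IndepFun W1 e1 P := hind.indepFun (show (0:Fin 3) ≠ 1 by decide)
  have h02 : IndepFun W1 e2 P := hind.indepFun (show (0:Fin 3) ≠ 2 by decide)
  have h12 : IndepFun e1 e2 P := hind.indepFun (show (1:Fin 3) ≠ 2 by decide)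
  have hsq1 : IndepFun (fun ω => W1 ω ^ 2) e1 P :=
    h01.comp (measurable_id.pow_const 2) measurable_id
  have hsq2 : IndepFun (fun ω => W1 ω ^ 2) e2 P :=
    h02.comp (measurable_id.pow_const 2) measurable_id
  have aW1 : AEStronglyMeasurable W1 P := hW1.aestronglyMeasurable
  have ae1 : AEStronglyMeasurable e1 P := he1.aestronglyMeasurable
  have ae2 : AEStronglyMeasurable e2 P := he2.aestronglyMeasurable
  have aW1sq : AEStronglyMeasurable (fun ω => W1 ω ^ 2) P :=
    (hW1.pow_const 2).aestronglyMeasurable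
  -- mixed moments
  have mix01 : ∫ ω, W1 ω * e1 ω ∂P = 0 := by
    rw [h01.integral_fun_mul_eq_mul_integral aW1 ae1, mW1_1, zero_mul]
  have mix02 : ∫ ω, W1 ω * e2 ω ∂P = 0 := by
    rw [h02.integral_fun_mul_eq_mul_integral aW1 ae2, mW1_1, zero_mul]
  have mix12 : ∫ ω, e1 ω * e2 ω ∂P = 0 := by
    rw [h12.integral_fun_mul_eq_mul_integral ae1 ae2, me1_1, zero_mul]
  have mixsq1 : ∫ ω, W1 ω ^ 2 * e1 ω ∂P = 0 := by
    rw [hsq1.integral_fun_mul_eq_mul_integral aW1sq ae1, me1_1, mul_zero]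
  have mixsq2 : ∫ ω, W1 ω ^ 2 * e2 ω ∂P = 0 := by
    rw [hsq2.integral_fun_mul_eq_mul_integral aW1sq ae2, me2_1, mul_zero]
  -- integrability of products
  have iW1e1 : Integrable (fun ω => W1 ω * e1 ω) P := h01.integrable_mul iW1_1 ie1_1
  have iW1sqe1 : Integrable (fun ω => W1 ω ^ 2 * e1 ω) P := hsq1.integrable_mul iW1_2 ie1_1
  have iW1sqe2 : Integrable (fun ω => W1 ω ^ 2 * e2 ω) P := hsq2.integrable_mul iW1_2 ie2_1
  have ie1e2 : Integrable (fun ω => e1 ω * e2 ω) P := h12.integrable_mul ie1_1 ie2_1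
  -- the six entries
  have A11 : ∫ ω, W1 ω * W1 ω ∂P = 1 := by
    simp_rw [← pow_two]; exact mW1_2
  have A12 : ∫ ω, W1 ω * W2 ω ∂P = 0 := by
    have hfe : (fun ω => W1 ω * W2 ω) = fun ω => W1 ω ^ 3 + W1 ω * e1 ω := by
      funext ω; rw [hW2]; ring
    rw [hfe, integral_add iW1_3 iW1e1, mW1_3, mix01, add_zero]
  have A21 : ∫ ω, W2 ω * W1 ω ∂P = 0 := by
    have hfe : (fun ω => W2 ω * W1 ω) = fun ω => W1 ω ^ 3 + W1 ω * e1 ω := by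
      funext ω; rw [hW2]; ring
    rw [hfe, integral_add iW1_3 iW1e1, mW1_3, mix01, add_zero]
  have A22 : ∫ ω, W2 ω * W2 ω ∂P = 4 := by
    have hfe : (fun ω => W2 ω * W2 ω)
        = fun ω => W1 ω ^ 4 + (2 * (W1 ω ^ 2 * e1 ω) + e1 ω ^ 2) := by
      funext ω; rw [hW2]; ring
    have iA : Integrable (fun ω => 2 * (W1 ω ^ 2 * e1 ω) + e1 ω ^ 2) P :=
      (iW1sqe1.const_mul 2).add ie1_2
    rw [hfe, integral_add iW1_4 iA, integral_add (iW1sqe1.const_mul 2) ie1_2,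
      integral_const_mul, mixsq1, mW1_4, me1_2]
    norm_num
  have B1 : ∫ ω, W1 ω * Y ω ∂P = 0 := by
    have hfe : (fun ω => W1 ω * Y ω) = fun ω => W1 ω ^ 3 + W1 ω * e2 ω := by
      funext ω; rw [hY]; ring
    have iW1e2 : Integrable (fun ω => W1 ω * e2 ω) P := h02.integrable_mul iW1_1 ie2_1
    rw [hfe, integral_add iW1_3 iW1e2, mW1_3, mix02, add_zero]
  have B2 : ∫ ω, W2 ω * Y ω ∂P = 3 := by
    have hfe : (fun ω => W2 ω * Y ω)
        = fun ω => W1 ω ^ 4 + (W1 ω ^ 2 * e2 ω + (W1 ω ^ 2 * e1 ω + e1 ω * e2 ω)) := by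
      funext ω; rw [hW2, hY]; ring
    have iB1 : Integrable (fun ω => W1 ω ^ 2 * e1 ω + e1 ω * e2 ω) P := iW1sqe1.add ie1e2
    have iB2 : Integrable (fun ω => W1 ω ^ 2 * e2 ω + (W1 ω ^ 2 * e1 ω + e1 ω * e2 ω)) P :=
      iW1sqe2.add iB1
    rw [hfe, integral_add iW1_4 iB2, integral_add iW1sqe2 iB1, integral_add iW1sqe1 ie1e2,
      mW1_4, mixsq2, mixsq1, mix12]
    norm_num
  rw [A11, A12, A21, A22, B1, B2]
  rw [Matrix.inv_def]
  funext i
  fin_cases i <;>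
    simp [Matrix.adjugate_fin_two, Matrix.det_fin_two, Matrix.mulVec, dotProduct,
      Fin.sum_univ_two, Ring.inverse_eq_inv']
  all_goals norm_num

end Main
end
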